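/- arXiv:math-ph/0605022 — 2 statements merged into one kernel-verified Lean document; each statement's English description precedes it below -/
import Mathlib

section
/- For any two formal power series identities: if F(n) = Σ_{p=0}^{2n+1} G(2n+1−p)·(G(p) + G(p−1)) for all n ≥ 0 (with G(−1) := 0), then setting ξ̄ = 2ξ − ξ², the generating functions f(ξ̄) = Σ_n (1−ξ̄)^n F(n) and g(ξ) = Σ_n (1−ξ)^n G(n) satisfy (1−ξ)·f(ξ̄) = odd part in (1−ξ) of [g(ξ)²·(2−ξ)]. -/
open PowerSeries

lemma coeff_sq_mk (G : ℕ → ℝ) (n : ℕ) :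
    (PowerSeries.coeff (R := ℝ) n) ((PowerSeries.mk G) ^ 2) =
      ∑ p ∈ Finset.range (n + 1), G p * G (n - p) := by
  rw [sq, PowerSeries.coeff_mul, Finset.Nat.sum_antidiagonal_eq_sum_range_succ_mk]
  simp

/-- If `F(n) = Σ_{p=0}^{2n+1} G(2n+1−p)(G(p) + G(p−1))` (with `G(−1) := 0`), then as formal
power series in `x = 1−ξ` (so `1−ξ̄ = x²`, `2−ξ = 1+x`), one has
`(1−ξ)·f(ξ̄) = odd part in x of [g(ξ)²(2−ξ)]`, where `f(ξ̄) = Σ F(n) x^{2n}` and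
`g(ξ) = Σ G(n) x^n`. -/
theorem gen_fn_odd_part (F G : ℕ → ℝ)
    (hF : ∀ n, F n = ∑ p ∈ Finset.range (2 * n + 2),
      G (2 * n + 1 - p) * (G p + if p = 0 then 0 else G (p - 1))) :
    ∀ k, (PowerSeries.coeff (R := ℝ) k)
        (PowerSeries.X * PowerSeries.mk (fun m => if m % 2 = 0 then F (m / 2) else 0)) =
      if Odd k then
        (PowerSeries.coeff (R := ℝ) k) ((PowerSeries.mk G) ^ 2 * (1 + PowerSeries.X))
      else 0 := by
  intro k
  match k with
  | 0 => simp
  | n + 1 =>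
    rw [PowerSeries.coeff_succ_X_mul, PowerSeries.coeff_mk]
    rcases Nat.even_or_odd n with he | ho
    · obtain ⟨m, rfl⟩ := he
      have hodd : Odd (m + m + 1) := ⟨m, by ring⟩
      rw [if_pos hodd, if_pos (by omega)]
      have hdiv : (m + m) / 2 = m := by omega
      rw [hdiv, mul_add, map_add, mul_one, PowerSeries.coeff_succ_mul_X,
        coeff_sq_mk, coeff_sq_mk, hF m]
      have h2 : 2 * m + 2 = (m + m + 1) + 1 := by ring
      rw [h2]
      have key : ∀ p, G (2 * m + 1 - p) * (G p + if p = 0 then 0 else G (p - 1)) =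
          G ((m + m + 1) - p) * G p + (if p = 0 then 0 else G ((m + m + 1) - p) * G (p - 1)) :=
        fun p => by split <;> simp [show 2*m+1 = m+m+1 by ring] <;> ring
      simp only [key]
      rw [Finset.sum_add_distrib]
      congr 1
      · exact Finset.sum_congr rfl fun p hp => mul_comm _ _
      · rw [Finset.sum_range_succ' _ (m + m + 1)]
        simp only [if_neg (Nat.succ_ne_zero _), Nat.add_sub_cancel, if_pos rfl, if_true, add_zero]
        exact Finset.sum_congr rfl fun q hq => by
          rw [mul_comm]
          congr 2
          omega
    · obtain ⟨m, rfl⟩ := ho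
      rw [if_neg (by simp [Nat.odd_iff, Nat.add_mod] : ¬ Odd (2 * m + 1 + 1)),
        if_neg (by omega : ¬ ((2 * m + 1) % 2 = 0))]
end

section
/- The soft-edge kernel identity: for all real x ≠ y, (Ai(x)Ai'(y) − Ai(y)Ai'(x))/(x − y) = ∫_0^∞ Ai(x+t)Ai(y+t) dt, where Ai is the Airy function satisfying Ai''(z) = z·Ai(z) and Ai, Ai' → 0 at +∞. -/
open MeasureTheory Filter

/-- Soft-edge (Airy) kernel identity: for a solution `Ai` of `w'' = z w` decaying together
with its derivative at `+∞` (with the integrals converging), for all `x ≠ y`,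
`(Ai(x)Ai'(y) − Ai(y)Ai'(x))/(x−y) = ∫_0^∞ Ai(x+t)Ai(y+t) dt`. -/
theorem airy_kernel_identity (Ai Ai' : ℝ → ℝ)
    (hAi : ∀ z, HasDerivAt Ai (Ai' z) z)
    (hAi' : ∀ z, HasDerivAt Ai' (z * Ai z) z)
    (hAi0 : Tendsto Ai atTop (nhds 0))
    (hAi'0 : Tendsto Ai' atTop (nhds 0))
    (hint : ∀ x y : ℝ, IntegrableOn (fun t => Ai (x + t) * Ai (y + t)) (Set.Ioi 0)) :
    ∀ x y : ℝ, x ≠ y →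
      (Ai x * Ai' y - Ai y * Ai' x) / (x - y) =
        ∫ t in Set.Ioi (0 : ℝ), Ai (x + t) * Ai (y + t) := by
  intro x y hxy
  have hyx : y - x ≠ 0 := sub_ne_zero.mpr (Ne.symm hxy)
  set f : ℝ → ℝ := fun t =>
    (Ai (x + t) * Ai' (y + t) - Ai (y + t) * Ai' (x + t)) / (y - x) with hf
  have hderiv : ∀ t : ℝ, HasDerivAt f (Ai (x + t) * Ai (y + t)) t := by
    intro t
    have hx1 : HasDerivAt (fun t => Ai (x + t)) (Ai' (x + t)) t := by
      simpa [Function.comp_def] using (hAi (x + t)).comp t ((hasDerivAt_id t).const_add x)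
    have hy1 : HasDerivAt (fun t => Ai (y + t)) (Ai' (y + t)) t := by
      simpa [Function.comp_def] using (hAi (y + t)).comp t ((hasDerivAt_id t).const_add y)
    have hx2 : HasDerivAt (fun t => Ai' (x + t)) ((x + t) * Ai (x + t)) t := by
      simpa [Function.comp_def] using (hAi' (x + t)).comp t ((hasDerivAt_id t).const_add x)
    have hy2 : HasDerivAt (fun t => Ai' (y + t)) ((y + t) * Ai (y + t)) t := by
      simpa [Function.comp_def] using (hAi' (y + t)).comp t ((hasDerivAt_id t).const_add y)
    have h := ((hx1.mul hy2).sub (hy1.mul hx2)).div_const (y - x)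
    have h' : HasDerivAt f _ t := h
    convert h' using 1
    field_simp
    ring
  have htend : Tendsto f atTop (nhds 0) := by
    have hx0 : Tendsto (fun t => Ai (x + t)) atTop (nhds 0) :=
      hAi0.comp (tendsto_atTop_add_const_left _ x tendsto_id)
    have hy0 : Tendsto (fun t => Ai (y + t)) atTop (nhds 0) :=
      hAi0.comp (tendsto_atTop_add_const_left _ y tendsto_id)
    have hx0' : Tendsto (fun t => Ai' (x + t)) atTop (nhds 0) :=
      hAi'0.comp (tendsto_atTop_add_const_left _ x tendsto_id)
    have hy0' : Tendsto (fun t => Ai' (y + t)) atTop (nhds 0) :=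
      hAi'0.comp (tendsto_atTop_add_const_left _ y tendsto_id)
    have := ((hx0.mul hy0').sub (hy0.mul hx0')).div_const (y - x)
    simpa using this
  have key := integral_Ioi_of_hasDerivAt_of_tendsto
    (f := f) (f' := fun t => Ai (x + t) * Ai (y + t)) (a := 0) (m := 0)
    (hderiv 0).continuousAt.continuousWithinAt
    (fun t _ => hderiv t) (hint x y) htend
  rw [key]
  have hxy' : x - y ≠ 0 := sub_ne_zero.mpr hxy
  simp only [hf, add_zero]
  field_simp
  ring
end
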